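/- Let g ∈ ℂ^N be a window with V_g g(λ) ≠ 0 for all λ ∈ (ℤ_N)². Then any x ∈ ℂ^N is determined by |V_g x| up to a global phase: if |V_g x| = |V_g y| pointwise on (ℤ_N)², then y = c x for some c ∈ ℂ with |c| = 1. -/

import Mathlib

open scoped Real ComplexConjugate BigOperators

/-- The character `m ↦ e^{2πi m/N}` on `ℤ_N`. -/
noncomputable def zchar (N : ℕ) [NeZero N] (m : ZMod N) : ℂ :=
  Complex.exp (2 * π * Complex.I * (m.val : ℝ) / N)

/-- Circular translation `(T_k x)_j = x_{j-k}` on `ℂ^N`. -/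
def tshift {N : ℕ} [NeZero N] (k : ZMod N) (x : ZMod N → ℂ) : ZMod N → ℂ :=
  fun j => x (j - k)

/-- Modulation `(M_l x)_j = e^{2πi jl/N} x_j` on `ℂ^N`. -/
noncomputable def mshift {N : ℕ} [NeZero N] (l : ZMod N) (x : ZMod N → ℂ) : ZMod N → ℂ :=
  fun j => zchar N (j * l) * x j

/-- Time-frequency shift `π(k,l) = M_l T_k`. -/
noncomputable def tfshift {N : ℕ} [NeZero N] (p : ZMod N × ZMod N)
    (x : ZMod N → ℂ) : ZMod N → ℂ :=
  mshift p.2 (tshift p.1 x)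

/-- The discrete short-time Fourier transform `V_g x(λ) = ⟨x, π(λ)g⟩`. -/
noncomputable def dstft {N : ℕ} [NeZero N] (g x : ZMod N → ℂ)
    (p : ZMod N × ZMod N) : ℂ :=
  ∑ n : ZMod N, x n * conj (tfshift p g n)

namespace PR
variable {N : ℕ} [NeZero N]

lemma zchar_eq_pow (m : ZMod N) :
    zchar N m = Complex.exp (2 * π * Complex.I / N) ^ m.val := by
  rw [← Complex.exp_nat_mul]
  unfold zchar
  congr 1
  push_cast
  ring

lemma zeta_pow_N : Complex.exp (2 * π * Complex.I / N) ^ N = 1 := by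
  rw [← Complex.exp_nat_mul]
  have hN : (N : ℂ) ≠ 0 := Nat.cast_ne_zero.mpr (NeZero.ne N)
  rw [mul_div_cancel₀ _ hN, Complex.exp_two_pi_mul_I]

lemma zchar_add (a b : ZMod N) : zchar N (a + b) = zchar N a * zchar N b := by
  rw [zchar_eq_pow, zchar_eq_pow, zchar_eq_pow, ← pow_add, ZMod.val_add,
    ← pow_eq_pow_mod _ zeta_pow_N]

lemma zchar_zero : zchar N 0 = 1 := by
  rw [zchar_eq_pow, ZMod.val_zero, pow_zero]

lemma zchar_neg_mul (m : ZMod N) : zchar N m * zchar N (-m) = 1 := by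
  rw [← zchar_add, add_neg_cancel, zchar_zero]

lemma conj_zchar (m : ZMod N) : conj (zchar N m) = zchar N (-m) := by
  have h1 : ‖zchar N m‖ = 1 := by
    unfold zchar
    have : (2 * π * Complex.I * (m.val : ℝ) / N) =
        ((2 * π * (m.val : ℝ) / N : ℝ) : ℂ) * Complex.I := by
      push_cast; ring
    rw [this, Complex.norm_exp_ofReal_mul_I]
  have h2 : zchar N m * conj (zchar N m) = 1 := by
    rw [Complex.mul_conj, Complex.normSq_eq_norm_sq, h1]; norm_num
  calc conj (zchar N m) = conj (zchar N m) * (zchar N m * zchar N (-m)) := by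
        rw [zchar_neg_mul, mul_one]
    _ = (zchar N m * conj (zchar N m)) * zchar N (-m) := by ring
    _ = zchar N (-m) := by rw [h2, one_mul]

lemma zchar_eq_one_iff {m : ZMod N} : zchar N m = 1 ↔ m = 0 := by
  constructor
  · intro h
    unfold zchar at h
    rw [Complex.exp_eq_one_iff] at h
    obtain ⟨n, hn⟩ := h
    push_cast at hn
    have hN : (N : ℂ) ≠ 0 := Nat.cast_ne_zero.mpr (NeZero.ne N)
    have hI : (2 * (π:ℂ) * Complex.I) ≠ 0 := by
      simp [Real.pi_ne_zero, Complex.I_ne_zero]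
    have h2 : (2 * (π:ℂ) * Complex.I) * ((m.val : ℂ) / N) =
        (2 * (π:ℂ) * Complex.I) * n := by
      linear_combination hn
    have h3 : (m.val : ℂ) = n * N := by
      have := mul_left_cancel₀ hI h2
      rw [div_eq_iff hN] at this
      exact this
    have h4 : (m.val : ℤ) = n * N := by exact_mod_cast h3
    have h5 : (N:ℤ) ∣ (m.val:ℤ) := ⟨n, by rw [h4]; ring⟩
    have h6 : N ∣ m.val := by exact_mod_cast h5
    have h7 : m.val = 0 := Nat.eq_zero_of_dvd_of_lt h6 (ZMod.val_lt m)
    exact (ZMod.val_eq_zero m).mp h7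
  · intro h; rw [h, zchar_zero]


lemma zchar_ne_one {m : ZMod N} (h : m ≠ 0) : zchar N m ≠ 1 :=
  fun hc => h (zchar_eq_one_iff.mp hc)

lemma sum_zchar_mul (a : ZMod N) :
    ∑ l : ZMod N, zchar N (a * l) = if a = 0 then (N : ℂ) else 0 := by
  split_ifs with h
  · subst h
    simp only [zero_mul, zchar_zero, Finset.sum_const, Finset.card_univ, ZMod.card, nsmul_eq_mul,
      mul_one]
  · have key : zchar N a * ∑ l : ZMod N, zchar N (a * l) = ∑ l : ZMod N, zchar N (a * l) := by
      rw [Finset.mul_sum]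
      calc ∑ l : ZMod N, zchar N a * zchar N (a * l)
          = ∑ l : ZMod N, zchar N (a * (l + 1)) := by
            apply Finset.sum_congr rfl; intro l _
            rw [← zchar_add]; congr 1; ring
        _ = ∑ l : ZMod N, zchar N (a * l) :=
            Equiv.sum_comp (Equiv.addRight (1 : ZMod N)) (fun l => zchar N (a * l))
    have h2 : (zchar N a - 1) * ∑ l : ZMod N, zchar N (a * l) = 0 := by
      rw [sub_mul, one_mul, key, sub_self]
    rcases mul_eq_zero.mp h2 with h3 | h3
    · exact absurd (by linear_combination h3) (zchar_ne_one h)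
    · exact h3


lemma tfshift_apply (k l j : ZMod N) (h : ZMod N → ℂ) :
    tfshift (k, l) h j = zchar N (j * l) * h (j - k) := rfl

lemma hN0 : (N : ℂ) ≠ 0 := Nat.cast_ne_zero.mpr (NeZero.ne N)

lemma neZero_of_sub_eq {u m n : ZMod N} : u - m + n = 0 ↔ n = m - u := by
  constructor <;> intro h
  · linear_combination h
  · linear_combination h

lemma stepB (g : ZMod N → ℂ) (a : ZMod N → ZMod N → ℂ)
    (hA : ∀ p : ZMod N × ZMod N,
      ∑ m : ZMod N, ∑ n : ZMod N,
        a m n * (conj (tfshift p g m) * tfshift p g n) = 0)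
    (u k : ZMod N) :
    ∑ m : ZMod N, a m (m - u) * (conj (g (m - k)) * g (m - k - u)) = 0 := by
  have key : ∑ l : ZMod N, zchar N (u * l) *
      (∑ m : ZMod N, ∑ n : ZMod N,
        a m n * (conj (tfshift (k, l) g m) * tfshift (k, l) g n))
      = (N : ℂ) * ∑ m : ZMod N, a m (m - u) * (conj (g (m - k)) * g (m - k - u)) := by
    calc ∑ l : ZMod N, zchar N (u * l) *
          (∑ m : ZMod N, ∑ n : ZMod N,
            a m n * (conj (tfshift (k, l) g m) * tfshift (k, l) g n))
        = ∑ m : ZMod N, ∑ n : ZMod N, ∑ l : ZMod N, zchar N (u * l) *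
            (a m n * (conj (tfshift (k, l) g m) * tfshift (k, l) g n)) := by
          simp only [Finset.mul_sum]
          rw [Finset.sum_comm]
          exact Finset.sum_congr rfl fun m _ => Finset.sum_comm
      _ = ∑ m : ZMod N, ∑ n : ZMod N,
            (a m n * (conj (g (m - k)) * g (n - k))) * ∑ l : ZMod N, zchar N ((u - m + n) * l) := by
          apply Finset.sum_congr rfl; intro m _
          apply Finset.sum_congr rfl; intro n _
          rw [Finset.mul_sum]
          apply Finset.sum_congr rfl; intro l _
          simp only [tfshift_apply, map_mul, conj_zchar]
          rw [show (u - m + n) * l = u * l + (-(m * l)) + n * l by ring, zchar_add, zchar_add]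
          ring
      _ = ∑ m : ZMod N, ∑ n : ZMod N,
            (if n = m - u then (a m n * (conj (g (m - k)) * g (n - k))) * (N : ℂ) else 0) := by
          apply Finset.sum_congr rfl; intro m _
          apply Finset.sum_congr rfl; intro n _
          rw [sum_zchar_mul]
          simp only [neZero_of_sub_eq (u := u) (m := m) (n := n), mul_ite, mul_zero]
      _ = (N : ℂ) * ∑ m : ZMod N, a m (m - u) * (conj (g (m - k)) * g (m - k - u)) := by
          rw [Finset.mul_sum]
          apply Finset.sum_congr rfl; intro m _
          rw [Finset.sum_ite_eq' Finset.univ (m - u)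
            (fun n => (a m n * (conj (g (m - k)) * g (n - k))) * (N : ℂ))]
          simp only [Finset.mem_univ, if_true, sub_sub]
          rw [show m - (k + u) = m - k - u by ring]
          ring
  have hz : ∑ l : ZMod N, zchar N (u * l) *
      (∑ m : ZMod N, ∑ n : ZMod N,
        a m n * (conj (tfshift (k, l) g m) * tfshift (k, l) g n)) = 0 := by
    apply Finset.sum_eq_zero; intro l _
    rw [hA (k, l), mul_zero]
  rw [key] at hz
  exact (mul_eq_zero.mp hz).resolve_left hN0


lemma stepC (g : ZMod N → ℂ) (a : ZMod N → ZMod N → ℂ)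
    (hB : ∀ u k : ZMod N,
      ∑ m : ZMod N, a m (m - u) * (conj (g (m - k)) * g (m - k - u)) = 0)
    (u v : ZMod N) :
    (∑ m : ZMod N, a m (m - u) * conj (zchar N (m * v))) * conj (dstft g g (u, v)) = 0 := by
  have key : ∑ k : ZMod N, conj (zchar N (k * v)) *
      (∑ m : ZMod N, a m (m - u) * (conj (g (m - k)) * g (m - k - u)))
      = (∑ m : ZMod N, a m (m - u) * conj (zchar N (m * v))) * conj (dstft g g (u, v)) := by
    have hD : conj (dstft g g (u, v)) =
        ∑ j : ZMod N, zchar N (j * v) * (conj (g j) * g (j - u)) := by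
      rw [dstft, map_sum]
      apply Finset.sum_congr rfl; intro j _
      simp only [tfshift_apply, map_mul, Complex.conj_conj]
      ring
    calc ∑ k : ZMod N, conj (zchar N (k * v)) *
          (∑ m : ZMod N, a m (m - u) * (conj (g (m - k)) * g (m - k - u)))
        = ∑ m : ZMod N, ∑ k : ZMod N, conj (zchar N (k * v)) *
            (a m (m - u) * (conj (g (m - k)) * g (m - k - u))) := by
          simp only [Finset.mul_sum]
          exact Finset.sum_comm
      _ = ∑ m : ZMod N, ∑ j : ZMod N, conj (zchar N ((m - j) * v)) *
            (a m (m - u) * (conj (g j) * g (j - u))) := by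
          apply Finset.sum_congr rfl; intro m _
          refine (Equiv.sum_comp (Equiv.subLeft m) (fun k => conj (zchar N (k * v)) *
            (a m (m - u) * (conj (g (m - k)) * g (m - k - u))))).symm.trans ?_
          apply Finset.sum_congr rfl; intro j _
          simp only [Equiv.subLeft_apply]
          rw [show m - (m - j) = j by ring]
      _ = ∑ m : ZMod N, (a m (m - u) * conj (zchar N (m * v))) *
            ∑ j : ZMod N, zchar N (j * v) * (conj (g j) * g (j - u)) := by
          apply Finset.sum_congr rfl; intro m _
          rw [Finset.mul_sum]
          apply Finset.sum_congr rfl; intro j _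
          rw [show (m - j) * v = m * v + (-(j * v)) by ring, zchar_add, map_mul,
            conj_zchar, conj_zchar, neg_neg]
          ring
      _ = (∑ m : ZMod N, a m (m - u) * conj (zchar N (m * v))) * conj (dstft g g (u, v)) := by
          rw [hD, ← Finset.sum_mul]
  rw [← key]
  apply Finset.sum_eq_zero; intro k _
  rw [hB u k, mul_zero]

lemma stepD (a : ZMod N → ZMod N → ℂ)
    (hc : ∀ u v : ZMod N, ∑ m : ZMod N, a m (m - u) * conj (zchar N (m * v)) = 0)
    (m n : ZMod N) : a m n = 0 := by
  have key : ∑ v : ZMod N, zchar N (m * v) *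
      (∑ m' : ZMod N, a m' (m' - (m - n)) * conj (zchar N (m' * v)))
      = (N : ℂ) * a m n := by
    calc ∑ v : ZMod N, zchar N (m * v) *
          (∑ m' : ZMod N, a m' (m' - (m - n)) * conj (zchar N (m' * v)))
        = ∑ m' : ZMod N, ∑ v : ZMod N, zchar N (m * v) *
            (a m' (m' - (m - n)) * conj (zchar N (m' * v))) := by
          simp only [Finset.mul_sum]
          exact Finset.sum_comm
      _ = ∑ m' : ZMod N, a m' (m' - (m - n)) * ∑ v : ZMod N, zchar N ((m - m') * v) := by
          apply Finset.sum_congr rfl; intro m' _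
          rw [Finset.mul_sum]
          apply Finset.sum_congr rfl; intro v _
          rw [show (m - m') * v = m * v + (-(m' * v)) by ring, zchar_add, conj_zchar]
          ring
      _ = ∑ m' : ZMod N, (if m' = m then a m' (m' - (m - n)) * (N : ℂ) else 0) := by
          apply Finset.sum_congr rfl; intro m' _
          rw [sum_zchar_mul]
          have : (m - m' = 0) ↔ (m' = m) := by
            constructor <;> intro h
            · linear_combination -h
            · linear_combination -h
          simp only [this, mul_ite, mul_zero]
      _ = (N : ℂ) * a m n := by
          rw [Finset.sum_ite_eq' Finset.univ m (fun m' => a m' (m' - (m - n)) * (N : ℂ))]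
          simp only [Finset.mem_univ, if_true]
          rw [show m - (m - n) = n by ring]
          ring
  have hz : ∑ v : ZMod N, zchar N (m * v) *
      (∑ m' : ZMod N, a m' (m' - (m - n)) * conj (zchar N (m' * v))) = 0 := by
    apply Finset.sum_eq_zero; intro v _
    rw [hc (m - n) v, mul_zero]
  rw [key] at hz
  exact (mul_eq_zero.mp hz).resolve_left hN0


end PR

/-- If the window `g` satisfies `V_g g(λ) ≠ 0` for all `λ ∈ (ℤ_N)²`, then every
`x ∈ ℂ^N` is determined by `|V_g x|` up to a global phase factor. -/
theorem dstft_phase_retrieval {N : ℕ} [NeZero N] (g x y : ZMod N → ℂ)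
    (hg : ∀ p : ZMod N × ZMod N, dstft g g p ≠ 0)
    (hxy : ∀ p : ZMod N × ZMod N, ‖dstft g x p‖ = ‖dstft g y p‖) :
    ∃ c : ℂ, ‖c‖ = 1 ∧ y = fun j => c * x j := by
  classical
  set a : ZMod N → ZMod N → ℂ := fun m n => x m * conj (x n) - y m * conj (y n) with ha
  -- Step A: the bilinear form of the hypothesis
  have expand : ∀ (z : ZMod N → ℂ) (p : ZMod N × ZMod N),
      dstft g z p * conj (dstft g z p) =
      ∑ m : ZMod N, ∑ n : ZMod N,
        (z m * conj (z n)) * (conj (tfshift p g m) * tfshift p g n) := by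
    intro z p
    rw [dstft, map_sum, Finset.sum_mul_sum]
    apply Finset.sum_congr rfl; intro m _
    apply Finset.sum_congr rfl; intro n _
    simp only [map_mul, Complex.conj_conj]
    ring
  have hA : ∀ p : ZMod N × ZMod N,
      ∑ m : ZMod N, ∑ n : ZMod N,
        a m n * (conj (tfshift p g m) * tfshift p g n) = 0 := by
    intro p
    have hsq : dstft g x p * conj (dstft g x p) = dstft g y p * conj (dstft g y p) := by
      rw [Complex.mul_conj, Complex.mul_conj]
      norm_cast
      rw [Complex.normSq_eq_norm_sq, Complex.normSq_eq_norm_sq, hxy p]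
    have := (expand x p).symm.trans (hsq.trans (expand y p))
    calc ∑ m : ZMod N, ∑ n : ZMod N,
          a m n * (conj (tfshift p g m) * tfshift p g n)
        = (∑ m : ZMod N, ∑ n : ZMod N,
            (x m * conj (x n)) * (conj (tfshift p g m) * tfshift p g n)) -
          ∑ m : ZMod N, ∑ n : ZMod N,
            (y m * conj (y n)) * (conj (tfshift p g m) * tfshift p g n) := by
          rw [← Finset.sum_sub_distrib]
          apply Finset.sum_congr rfl; intro m _
          rw [← Finset.sum_sub_distrib]
          apply Finset.sum_congr rfl; intro n _
          simp only [ha]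
          ring
      _ = 0 := by rw [this, sub_self]
  have hB := PR.stepB g a hA
  have hc : ∀ u v : ZMod N, ∑ m : ZMod N, a m (m - u) * conj (zchar N (m * v)) = 0 := by
    intro u v
    have := PR.stepC g a hB u v
    rcases mul_eq_zero.mp this with h | h
    · exact h
    · exfalso
      apply hg (u, v)
      have h2 := congrArg (starRingEnd ℂ) h
      simpa using h2
  have hD : ∀ m n : ZMod N, x m * conj (x n) = y m * conj (y n) := by
    intro m n
    have := PR.stepD a hc m n
    simp only [ha] at this
    exact sub_eq_zero.mp this
  -- Step E: extract the phase factor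
  by_cases hx0 : x = 0
  · refine ⟨1, by norm_num, ?_⟩
    funext j
    have h : y j * conj (y j) = 0 := by
      rw [← hD j j, hx0]; simp
    rw [Complex.mul_conj] at h
    norm_cast at h
    have hyj := Complex.normSq_eq_zero.mp h
    simp [hx0, hyj]
  · obtain ⟨n, hn⟩ : ∃ n, x n ≠ 0 := by
      by_contra hcon; push_neg at hcon; exact hx0 (funext hcon)
    have hnn : x n * conj (x n) = y n * conj (y n) := hD n n
    have hyn : y n ≠ 0 := by
      intro h0
      rw [h0, map_zero, mul_zero] at hnn
      rcases mul_eq_zero.mp hnn with h | h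
      · exact hn h
      · exact hn (by simpa using congrArg (starRingEnd ℂ) h)
    have habs : ‖x n‖ = ‖y n‖ := by
      have h1 : Complex.normSq (x n) = Complex.normSq (y n) := by
        have h2 := hnn
        rw [Complex.mul_conj, Complex.mul_conj] at h2
        exact_mod_cast h2
      rw [Complex.norm_def, Complex.norm_def, h1]
    have hcy : conj (y n) ≠ 0 := fun h => hyn (by simpa using congrArg (starRingEnd ℂ) h)
    refine ⟨conj (x n / y n), ?_, ?_⟩
    · rw [RCLike.norm_conj, norm_div, habs,
        div_self (norm_ne_zero_iff.mpr hyn)]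
    · funext j
      have h := hD j n
      rw [map_div₀, div_mul_eq_mul_div, eq_div_iff hcy]
      linear_combination -h
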